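/- For any positive integers s and m, the sum over all multi-indices α ∈ ℕˢ with |α| = m of ∏_{i=1}^s 1/(1+α_i)² is at most 20ˢ/(m+1)². -/

import Mathlib

open Finset Finset.Nat

noncomputable def Fsum (s m : ℕ) : ℝ :=
  ∑ α ∈ Finset.Nat.antidiagonalTuple s m, ∏ i : Fin s, (1 : ℝ) / ((1 : ℝ) + (α i : ℝ)) ^ 2

lemma Fsum_nonneg (s m : ℕ) : 0 ≤ Fsum s m := by
  apply Finset.sum_nonneg
  intro α _
  apply Finset.prod_nonneg
  intro i _
  positivity

lemma Fsum_succ (s m : ℕ) :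
    Fsum (s + 1) m = ∑ p ∈ antidiagonal m,
      (1 : ℝ) / ((1 : ℝ) + (p.1 : ℝ)) ^ 2 * Fsum s p.2 := by
  unfold Fsum
  simp_rw [Finset.mul_sum]
  rw [Finset.sum_sigma']
  apply Finset.sum_nbij' (i := fun α => (⟨(α 0, ∑ i, Fin.tail α i), Fin.tail α⟩ :
      Σ _p : ℕ × ℕ, Fin s → ℕ)) (j := fun q => Fin.cons q.1.1 q.2)
  · intro α hα
    simp only [Finset.Nat.mem_antidiagonalTuple] at hα
    simp only [Finset.mem_sigma, HasAntidiagonal.mem_antidiagonal, Finset.Nat.mem_antidiagonalTuple]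
    refine ⟨?_, by simp⟩
    rw [← hα, Fin.sum_univ_succ]
    rfl
  · intro q hq
    simp only [Finset.mem_sigma, HasAntidiagonal.mem_antidiagonal, Finset.Nat.mem_antidiagonalTuple] at hq
    simp only [Finset.Nat.mem_antidiagonalTuple, Fin.sum_univ_succ, Fin.cons_zero, Fin.cons_succ]
    rw [hq.2, hq.1]
  · intro α _
    simp [Fin.cons_self_tail]
  · intro q hq
    simp only [Finset.mem_sigma, HasAntidiagonal.mem_antidiagonal, Finset.Nat.mem_antidiagonalTuple] at hq
    simp only [Fin.cons_zero, Fin.tail_cons]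
    rw [hq.2]
  · intro α _
    rw [Fin.prod_univ_succ]
    simp [Fin.tail]

lemma partial_basel : ∀ n : ℕ, 1 ≤ n →
    ∑ k ∈ range n, (1 : ℝ) / ((1 : ℝ) + (k : ℝ)) ^ 2 ≤ 2 - 1 / n := by
  intro n hn
  induction n, hn using Nat.le_induction with
  | base => norm_num
  | succ n hn ih =>
    rw [Finset.sum_range_succ]
    have h1 : (1 : ℝ) ≤ (n : ℝ) := by exact_mod_cast hn
    have h2 : (0 : ℝ) < n := by linarith
    have key : (1 : ℝ) / ((1 : ℝ) + (n : ℝ)) ^ 2 ≤ 1 / n - 1 / (n + 1) := by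
      rw [div_sub_div _ _ (ne_of_gt h2) (by linarith)]
      rw [div_le_div_iff₀ (by positivity) (by positivity)]
      ring_nf
      nlinarith
    push_cast
    linarith

lemma basel_le_two (n : ℕ) : ∑ k ∈ range n, (1 : ℝ) / ((1 : ℝ) + (k : ℝ)) ^ 2 ≤ 2 := by
  rcases Nat.eq_zero_or_pos n with h | h
  · simp [h]
  · have := partial_basel n h
    have h2 : (0 : ℝ) < n := by exact_mod_cast h
    have : (0:ℝ) < 1 / n := by positivity
    linarith [partial_basel n h]

lemma Gsum_le (s m : ℕ) : ∑ j ∈ range (m + 1), Fsum s j ≤ 2 ^ s := by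
  unfold Fsum
  classical
  have hdisj : (↑(range (m + 1)) : Set ℕ).PairwiseDisjoint
      (Finset.Nat.antidiagonalTuple s) := by
    intro j _ j' _ hjj'
    simp only [Function.onFun]
    rw [Finset.disjoint_left]
    intro α hα hα'
    rw [Finset.Nat.mem_antidiagonalTuple] at hα hα'
    exact hjj' (hα ▸ hα')
  rw [← Finset.sum_biUnion hdisj]
  · calc ∑ α ∈ (range (m+1)).biUnion (fun j => Finset.Nat.antidiagonalTuple s j),
          ∏ i : Fin s, (1 : ℝ) / ((1 : ℝ) + (α i : ℝ)) ^ 2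
        ≤ ∑ α ∈ Fintype.piFinset (fun _ : Fin s => range (m+1)),
          ∏ i : Fin s, (1 : ℝ) / ((1 : ℝ) + (α i : ℝ)) ^ 2 := by
          apply Finset.sum_le_sum_of_subset_of_nonneg
          · intro α hα
            simp only [Finset.mem_biUnion, Finset.mem_range,
              Finset.Nat.mem_antidiagonalTuple] at hα
            obtain ⟨j, hj, hsum⟩ := hα
            simp only [Fintype.mem_piFinset, Finset.mem_range]
            intro i
            have h1 : α i ≤ ∑ i', α i' :=
              Finset.single_le_sum (fun _ _ => Nat.zero_le _) (Finset.mem_univ i)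
            omega
          · intro α _ _
            apply Finset.prod_nonneg; intro i _; positivity
      _ = ∏ _i : Fin s, ∑ k ∈ range (m+1), (1 : ℝ) / ((1 : ℝ) + (k : ℝ)) ^ 2 := by
          rw [Finset.prod_univ_sum]
      _ ≤ ∏ _i : Fin s, (2 : ℝ) := by
          apply Finset.prod_le_prod
          · intro i _; positivity
          · intro i _; exact basel_le_two _
      _ = 2 ^ s := by simp

lemma Fsum_le (s : ℕ) (hs : 1 ≤ s) : ∀ m : ℕ, Fsum s m ≤ 20 ^ s / ((m : ℝ) + 1) ^ 2 := by
  induction s, hs using Nat.le_induction with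
  | base =>
    intro m
    unfold Fsum
    rw [Finset.Nat.antidiagonalTuple_one]
    simp only [Finset.sum_singleton, Fin.prod_univ_one]
    rw [Matrix.cons_val_zero]
    rw [div_le_div_iff₀ (by positivity) (by positivity)]
    have : (0:ℝ) ≤ m := Nat.cast_nonneg m
    nlinarith
  | succ s hs ih =>
    intro m
    rw [Fsum_succ]
    classical
    rw [← Finset.sum_filter_add_sum_filter_not (antidiagonal m) (fun p => 2 * p.1 ≤ m)]
    have hm1 : (0:ℝ) < (m:ℝ) + 1 := by positivity
    have partA : ∑ p ∈ (antidiagonal m).filter (fun p => 2 * p.1 ≤ m),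
        (1 : ℝ) / ((1 : ℝ) + (p.1 : ℝ)) ^ 2 * Fsum s p.2 ≤ 8 * 20 ^ s / ((m : ℝ) + 1) ^ 2 := by
      calc ∑ p ∈ (antidiagonal m).filter (fun p => 2 * p.1 ≤ m),
            (1 : ℝ) / ((1 : ℝ) + (p.1 : ℝ)) ^ 2 * Fsum s p.2
          ≤ ∑ p ∈ (antidiagonal m).filter (fun p => 2 * p.1 ≤ m),
            (1 : ℝ) / ((1 : ℝ) + (p.1 : ℝ)) ^ 2 * (4 * 20 ^ s / ((m : ℝ) + 1) ^ 2) := by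
            apply Finset.sum_le_sum
            intro p hp
            simp only [Finset.mem_filter, HasAntidiagonal.mem_antidiagonal] at hp
            obtain ⟨hpm, hp1⟩ := hp
            apply mul_le_mul_of_nonneg_left _ (by positivity)
            have h2 : m ≤ 2 * p.2 := by omega
            have h2' : (m:ℝ) + 1 ≤ 2 * ((p.2:ℝ) + 1) := by
              have : (m:ℝ) ≤ 2 * (p.2:ℝ) := by exact_mod_cast h2
              linarith
            calc Fsum s p.2 ≤ 20 ^ s / ((p.2 : ℝ) + 1) ^ 2 := ih p.2
              _ ≤ 4 * 20 ^ s / ((m : ℝ) + 1) ^ 2 := by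
                  rw [div_le_div_iff₀ (by positivity) (by positivity)]
                  nlinarith [pow_pos (show (0:ℝ) < 20 by norm_num) s,
                    mul_le_mul h2' h2' (le_of_lt hm1)
                      (by positivity : (0:ℝ) ≤ 2 * ((p.2:ℝ) + 1))]
        _ ≤ (∑ p ∈ antidiagonal m, (1 : ℝ) / ((1 : ℝ) + (p.1 : ℝ)) ^ 2)
              * (4 * 20 ^ s / ((m : ℝ) + 1) ^ 2) := by
            rw [← Finset.sum_mul]
            apply mul_le_mul_of_nonneg_right _ (by positivity)
            apply Finset.sum_le_sum_of_subset_of_nonneg (Finset.filter_subset _ _)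
            intro p _ _; positivity
        _ ≤ 2 * (4 * 20 ^ s / ((m : ℝ) + 1) ^ 2) := by
            apply mul_le_mul_of_nonneg_right _ (by positivity)
            rw [Nat.sum_antidiagonal_eq_sum_range_succ_mk]
            exact basel_le_two (m+1)
        _ = 8 * 20 ^ s / ((m : ℝ) + 1) ^ 2 := by ring
    have partB : ∑ p ∈ (antidiagonal m).filter (fun p => ¬ 2 * p.1 ≤ m),
        (1 : ℝ) / ((1 : ℝ) + (p.1 : ℝ)) ^ 2 * Fsum s p.2 ≤ 4 * 2 ^ s / ((m : ℝ) + 1) ^ 2 := by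
      calc ∑ p ∈ (antidiagonal m).filter (fun p => ¬ 2 * p.1 ≤ m),
            (1 : ℝ) / ((1 : ℝ) + (p.1 : ℝ)) ^ 2 * Fsum s p.2
          ≤ ∑ p ∈ (antidiagonal m).filter (fun p => ¬ 2 * p.1 ≤ m),
            4 / ((m : ℝ) + 1) ^ 2 * Fsum s p.2 := by
            apply Finset.sum_le_sum
            intro p hp
            simp only [Finset.mem_filter, HasAntidiagonal.mem_antidiagonal, not_le] at hp
            obtain ⟨hpm, hp1⟩ := hp
            apply mul_le_mul_of_nonneg_right _ (Fsum_nonneg s p.2)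
            have h2' : (m:ℝ) + 1 ≤ 2 * ((p.1:ℝ) + 1) := by
              have h2 : m ≤ 2 * p.1 := le_of_lt hp1
              have : (m:ℝ) ≤ 2 * (p.1:ℝ) := by exact_mod_cast h2
              linarith
            rw [div_le_div_iff₀ (by positivity) (by positivity)]
            nlinarith [mul_le_mul h2' h2' (le_of_lt hm1)
              (by positivity : (0:ℝ) ≤ 2 * ((p.1:ℝ) + 1))]
        _ ≤ ∑ p ∈ antidiagonal m, 4 / ((m : ℝ) + 1) ^ 2 * Fsum s p.2 := by
            apply Finset.sum_le_sum_of_subset_of_nonneg (Finset.filter_subset _ _)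
            intro p _ _
            exact mul_nonneg (by positivity) (Fsum_nonneg s p.2)
        _ = 4 / ((m : ℝ) + 1) ^ 2 * ∑ p ∈ antidiagonal m, Fsum s p.2 := by
            rw [Finset.mul_sum]
        _ ≤ 4 / ((m : ℝ) + 1) ^ 2 * 2 ^ s := by
            apply mul_le_mul_of_nonneg_left _ (by positivity)
            rw [Nat.sum_antidiagonal_eq_sum_range_succ_mk]
            have : ∑ k ∈ range (m+1), Fsum s (m - k) = ∑ k ∈ range (m+1), Fsum s k := by
              have := Finset.sum_range_reflect (fun k => Fsum s k) (m+1)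
              simpa using this
            rw [this]
            exact Gsum_le s m
        _ = 4 * 2 ^ s / ((m : ℝ) + 1) ^ 2 := by ring
    have h20 : (2:ℝ) ^ s ≤ 20 ^ s := by
      apply pow_le_pow_left₀ (by norm_num) (by norm_num)
    calc _ ≤ 8 * 20 ^ s / ((m : ℝ) + 1) ^ 2 + 4 * 2 ^ s / ((m : ℝ) + 1) ^ 2 :=
          add_le_add partA partB
      _ ≤ 20 ^ (s + 1) / ((m : ℝ) + 1) ^ 2 := by
          rw [← add_div, pow_succ]
          apply div_le_div_of_nonneg_right _ (by positivity)
          linarith [h20, pow_nonneg (show (0:ℝ) ≤ 20 by norm_num) s,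
            pow_succ (20:ℝ) s]

theorem stmt_2 (s m : ℕ) (hs : 1 ≤ s) (hm : 1 ≤ m) :
    ∑ α ∈ Finset.Nat.antidiagonalTuple s m,
        ∏ i : Fin s, (1 : ℝ) / ((1 : ℝ) + (α i : ℝ)) ^ 2 ≤
      20 ^ s / ((m : ℝ) + 1) ^ 2 := by
  exact Fsum_le s hs m
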